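/- Let f : D → H ⊆ Ĉ be a conformal map from the unit disc onto a simply connected domain H, and let z ∈ ∂H be a boundary point. Then the set of points ζ ∈ ∂D at which f has radial limit equal to z has one-dimensional Lebesgue measure (arc-length measure) zero. -/

import Mathlib

open Set Filter Metric Topology Complex intervalIntegral MeasureTheory

/-- Existence of a holomorphic logarithm on the unit ball. -/
lemma exists_log_ball {g : ℂ → ℂ} (hg : DifferentiableOn ℂ g (ball 0 1))
    (h0 : ∀ w ∈ ball (0:ℂ) 1, g w ≠ 0) :
    ∃ L : ℂ → ℂ, (∀ w ∈ ball (0:ℂ) 1, HasDerivAt L (deriv g w / g w) w) ∧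
      ∀ w ∈ ball (0:ℂ) 1, Complex.exp (L w) = g w := by
  have hball : IsOpen (ball (0:ℂ) 1) := isOpen_ball
  have hga : AnalyticOnNhd ℂ g (ball 0 1) := hg.analyticOnNhd hball
  have hg' : DifferentiableOn ℂ (deriv g) (ball 0 1) := (hga.deriv).differentiableOn
  set q : ℂ → ℂ := fun w => deriv g w / g w with hq_def
  have hq : DifferentiableOn ℂ q (ball 0 1) := hg'.div hg h0
  have hqa : AnalyticOnNhd ℂ q (ball 0 1) := hq.analyticOnNhd hball
  have hq' : DifferentiableOn ℂ (deriv q) (ball 0 1) := (hqa.deriv).differentiableOn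
  have hqAt : ∀ w ∈ ball (0:ℂ) 1, HasDerivAt q (deriv q w) w := fun w hw =>
    (hq.differentiableAt (hball.mem_nhds hw)).hasDerivAt
  -- primitive of q on the ball
  set P : ℂ → ℂ := fun w => ∫ t in (0:ℝ)..1, w * q ((t : ℂ) * w) with hP_def
  have hP : ∀ w ∈ ball (0:ℂ) 1, HasDerivAt P (q w) w := by
    intro w₀ hw₀
    have hn : ‖w₀‖ < 1 := by simpa using hw₀
    set ε : ℝ := (1 - ‖w₀‖) / 2 with hε_def
    have hε : 0 < ε := by simp only [hε_def]; linarith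
    set ρ : ℝ := ‖w₀‖ + ε with hρ_def
    have hρ1 : ρ < 1 := by simp only [hρ_def, hε_def]; linarith
    have hρ0 : 0 ≤ ρ := by positivity
    have hmem : ∀ (t : ℝ), t ∈ Set.Icc (0:ℝ) 1 → ∀ x ∈ ball w₀ ε, ((t:ℂ) * x) ∈ ball (0:ℂ) 1 := by
      intro t ht x hx
      have hxn : ‖x‖ ≤ ρ := by
        have := (norm_sub_norm_le x w₀).trans (mem_ball_iff_norm.1 hx).le
        simp only [hρ_def]; linarith
      have : ‖(t:ℂ) * x‖ ≤ ρ := by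
        rw [norm_mul]
        calc ‖(t:ℂ)‖ * ‖x‖ ≤ 1 * ρ := by
              apply mul_le_mul _ hxn (norm_nonneg _) zero_le_one
              simpa [Complex.norm_real] using abs_le.2 ⟨by linarith [ht.1], ht.2⟩
          _ = ρ := one_mul ρ
      simpa using lt_of_le_of_lt this hρ1
    -- bounds for q and deriv q on closedBall 0 ρ
    obtain ⟨C₁, hC₁⟩ := (isCompact_closedBall (0:ℂ) ρ).exists_bound_of_continuousOn
      ((hq.continuousOn).mono (fun x hx => by
        simp only [mem_closedBall, dist_zero_right] at hx
        simpa using lt_of_le_of_lt hx hρ1))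
    obtain ⟨C₂, hC₂⟩ := (isCompact_closedBall (0:ℂ) ρ).exists_bound_of_continuousOn
      ((hq'.continuousOn).mono (fun x hx => by
        simp only [mem_closedBall, dist_zero_right] at hx
        simpa using lt_of_le_of_lt hx hρ1))
    have hmem' : ∀ (t : ℝ), t ∈ Set.Icc (0:ℝ) 1 → ∀ x ∈ ball w₀ ε,
        ((t:ℂ) * x) ∈ closedBall (0:ℂ) ρ := by
      intro t ht x hx
      have hxn : ‖x‖ ≤ ρ := by
        have := (norm_sub_norm_le x w₀).trans (mem_ball_iff_norm.1 hx).le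
        simp only [hρ_def]; linarith
      simp only [mem_closedBall, dist_zero_right, norm_mul]
      calc ‖(t:ℂ)‖ * ‖x‖ ≤ 1 * ρ := by
            apply mul_le_mul _ hxn (norm_nonneg _) zero_le_one
            simpa [Complex.norm_real] using abs_le.2 ⟨by linarith [ht.1], ht.2⟩
        _ = ρ := one_mul ρ
    have key := intervalIntegral.hasDerivAt_integral_of_dominated_loc_of_deriv_le
      (F := fun x (t : ℝ) => x * q ((t:ℂ) * x))
      (F' := fun x (t : ℝ) => q ((t:ℂ) * x) + x * (deriv q ((t:ℂ) * x) * (t:ℂ)))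
      (x₀ := w₀) (a := (0:ℝ)) (b := 1) (μ := volume)
      (bound := fun _ => C₁ + ρ * C₂) (Metric.ball_mem_nhds w₀ hε) ?_ ?_ ?_ ?_ ?_ ?_
    · rcases key with ⟨-, hkey⟩
      have : (∫ t in (0:ℝ)..1, (q ((t:ℂ) * w₀) + w₀ * (deriv q ((t:ℂ) * w₀) * (t:ℂ)))) = q w₀ := by
        have hderiv : ∀ t ∈ Set.uIcc (0:ℝ) 1,
            HasDerivAt (fun s : ℝ => (s:ℂ) * q ((s:ℂ) * w₀))
              (q ((t:ℂ) * w₀) + w₀ * (deriv q ((t:ℂ) * w₀) * (t:ℂ))) t := by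
          intro t ht
          rw [Set.uIcc_of_le (by norm_num : (0:ℝ) ≤ 1)] at ht
          have h1 : ((t:ℂ) * w₀) ∈ ball (0:ℂ) 1 := hmem t ht w₀ (mem_ball_self hε)
          have hin : HasDerivAt (fun s : ℂ => s * q (s * w₀))
              (q ((t:ℂ) * w₀) + (t:ℂ) * (deriv q ((t:ℂ) * w₀) * w₀)) (t:ℂ) := by
            have hq1 : HasDerivAt (fun s : ℂ => q (s * w₀)) (deriv q ((t:ℂ) * w₀) * w₀) (t:ℂ) := by
              have := (hqAt _ h1).comp (t:ℂ) ((hasDerivAt_id (t:ℂ)).mul_const w₀)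
              simpa [Function.comp_def] using this
            have := (hasDerivAt_id (t:ℂ)).mul hq1
            simpa [mul_comm, Pi.mul_def] using this
          have := hin.comp_ofReal
          convert this using 1
          ring
        have := intervalIntegral.integral_eq_sub_of_hasDerivAt hderiv ?_
        · rw [this]; simp
        · apply ContinuousOn.intervalIntegrable
          rw [Set.uIcc_of_le (by norm_num : (0:ℝ) ≤ 1)]
          apply ContinuousOn.add
          · exact (hq.continuousOn.comp (by fun_prop)
              (fun t ht => hmem t ht w₀ (mem_ball_self hε)))
          · exact ContinuousOn.mul continuousOn_const
              (ContinuousOn.mul (hq'.continuousOn.comp (by fun_prop)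
                (fun t ht => hmem t ht w₀ (mem_ball_self hε))) (by fun_prop))
      rwa [this] at hkey
    · -- measurability of F x
      filter_upwards [hball.mem_nhds hw₀] with x hx
      apply ContinuousOn.aestronglyMeasurable _ measurableSet_uIoc
      have hsub : Set.uIoc (0:ℝ) 1 ⊆ Set.Icc (0:ℝ) 1 := by
        rw [Set.uIoc_of_le (by norm_num : (0:ℝ) ≤ 1)]; exact Ioc_subset_Icc_self
      apply ContinuousOn.mono _ hsub
      exact ContinuousOn.mul continuousOn_const (hq.continuousOn.comp (by fun_prop)
        (fun t ht => by
          have h1 : ((t:ℂ) * x) ∈ ball (0:ℂ) 1 := by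
            have hxn : ‖x‖ < 1 := by simpa using hx
            have : ‖(t:ℂ) * x‖ ≤ ‖x‖ := by
              rw [norm_mul]
              calc ‖(t:ℂ)‖ * ‖x‖ ≤ 1 * ‖x‖ := by
                    apply mul_le_mul _ le_rfl (norm_nonneg _) zero_le_one
                    simpa [Complex.norm_real] using abs_le.2 ⟨by linarith [ht.1], ht.2⟩
                _ = ‖x‖ := one_mul _
            simpa using lt_of_le_of_lt this hxn
          exact h1))
    · -- interval integrability of F x₀
      apply ContinuousOn.intervalIntegrable
      rw [Set.uIcc_of_le (by norm_num : (0:ℝ) ≤ 1)]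
      exact ContinuousOn.mul continuousOn_const (hq.continuousOn.comp (by fun_prop)
        (fun t ht => hmem t ht w₀ (mem_ball_self hε)))
    · -- measurability of F' x₀
      apply ContinuousOn.aestronglyMeasurable _ measurableSet_uIoc
      have hsub : Set.uIoc (0:ℝ) 1 ⊆ Set.Icc (0:ℝ) 1 := by
        rw [Set.uIoc_of_le (by norm_num : (0:ℝ) ≤ 1)]; exact Ioc_subset_Icc_self
      apply ContinuousOn.mono _ hsub
      apply ContinuousOn.add
      · exact hq.continuousOn.comp (by fun_prop)
          (fun t ht => hmem t ht w₀ (mem_ball_self hε))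
      · exact ContinuousOn.mul continuousOn_const
          (ContinuousOn.mul (hq'.continuousOn.comp (by fun_prop)
            (fun t ht => hmem t ht w₀ (mem_ball_self hε))) (by fun_prop))
    · -- bound
      apply ae_of_all
      intro t ht x hx
      have ht' : t ∈ Set.Icc (0:ℝ) 1 := by
        rw [Set.uIoc_of_le (by norm_num : (0:ℝ) ≤ 1)] at ht
        exact Ioc_subset_Icc_self ht
      have h1 := hmem' t ht' x hx
      have hxn : ‖x‖ ≤ ρ := by
        have := (norm_sub_norm_le x w₀).trans (mem_ball_iff_norm.1 hx).le
        simp only [hρ_def]; linarith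
      have htn : ‖(t:ℂ)‖ ≤ 1 := by
        simpa [Complex.norm_real] using abs_le.2 ⟨by linarith [ht'.1], ht'.2⟩
      calc ‖q ((t:ℂ) * x) + x * (deriv q ((t:ℂ) * x) * (t:ℂ))‖
          ≤ ‖q ((t:ℂ) * x)‖ + ‖x * (deriv q ((t:ℂ) * x) * (t:ℂ))‖ := norm_add_le _ _
        _ ≤ C₁ + ρ * C₂ := by
            have hb1 := hC₁ _ h1
            have hb2 := hC₂ _ h1
            have hC₂0 : 0 ≤ C₂ := le_trans (norm_nonneg _) hb2
            have : ‖x * (deriv q ((t:ℂ) * x) * (t:ℂ))‖ ≤ ρ * C₂ := by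
              rw [norm_mul, norm_mul]
              calc ‖x‖ * (‖deriv q ((t:ℂ) * x)‖ * ‖(t:ℂ)‖)
                  ≤ ρ * (C₂ * 1) := by
                    apply mul_le_mul hxn _ (by positivity) hρ0
                    exact mul_le_mul hb2 htn (norm_nonneg _) hC₂0
                _ = ρ * C₂ := by ring
            linarith
    · -- bound integrable
      exact intervalIntegrable_const
    · -- differentiability in x
      apply ae_of_all
      intro t ht x hx
      have ht' : t ∈ Set.Icc (0:ℝ) 1 := by
        rw [Set.uIoc_of_le (by norm_num : (0:ℝ) ≤ 1)] at ht
        exact Ioc_subset_Icc_self ht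
      have h1 : ((t:ℂ) * x) ∈ ball (0:ℂ) 1 := hmem t ht' x hx
      have hq1 : HasDerivAt (fun s : ℂ => q ((t:ℂ) * s)) (deriv q ((t:ℂ) * x) * (t:ℂ)) x := by
        have := (hqAt _ h1).comp x ((hasDerivAt_id x).const_mul (t:ℂ))
        simpa [Function.comp_def, mul_comm] using this
      have := (hasDerivAt_id x).mul hq1
      simpa [mul_comm, mul_left_comm, Pi.mul_def] using this
  -- define L and conclude
  set L : ℂ → ℂ := fun w => Complex.log (g 0) + P w with hL_def
  have hL : ∀ w ∈ ball (0:ℂ) 1, HasDerivAt L (q w) w := by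
    intro w hw
    simpa [hL_def] using (hP w hw).const_add (Complex.log (g 0))
  refine ⟨L, hL, ?_⟩
  -- the function g * exp (-L) is constant
  set φ : ℂ → ℂ := fun w => g w * Complex.exp (-L w) with hφ_def
  have hφd : ∀ w ∈ ball (0:ℂ) 1, HasDerivAt φ 0 w := by
    intro w hw
    have hgd : HasDerivAt g (deriv g w) w := (hg.differentiableAt (hball.mem_nhds hw)).hasDerivAt
    have hed : HasDerivAt (fun w => Complex.exp (-L w)) (-q w * Complex.exp (-L w)) w := by
      have := (Complex.hasDerivAt_exp (-L w)).comp w ((hL w hw).neg)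
      simpa [mul_comm, Function.comp_def] using this
    have := hgd.mul hed
    have hgw : g w ≠ 0 := h0 w hw
    have hqw : g w * q w = deriv g w := by simp only [hq_def]; field_simp
    exact this.congr_deriv (by rw [← hqw]; ring)
  have hφc : ∀ w ∈ ball (0:ℂ) 1, φ w = φ 0 := by
    intro w hw
    have hφdiff : DifferentiableOn ℂ φ (ball 0 1) := fun x hx =>
      ((hφd x hx).differentiableAt).differentiableWithinAt
    apply (convex_ball (0:ℂ) 1).is_const_of_fderivWithin_eq_zero hφdiff _ hw
      (mem_ball_self one_pos)
    intro x hx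
    have : fderiv ℂ φ x = 0 := by
      have := (hφd x hx).hasFDerivAt.fderiv
      rw [this]; ext y; simp
    rw [fderivWithin_of_isOpen hball hx, this]
  intro w hw
  have h00 : (0:ℂ) ∈ ball (0:ℂ) 1 := mem_ball_self one_pos
  have hφ0 : φ 0 = 1 := by
    have hP0 : P 0 = 0 := by simp [hP_def]
    simp only [hφ_def, hL_def, hP0, add_zero, Complex.exp_neg, Complex.exp_log (h0 0 h00)]
    exact mul_inv_cancel₀ (h0 0 h00)
  have hkey := hφc w hw
  rw [hφ0] at hkey
  simp only [hφ_def, Complex.exp_neg] at hkey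
  have hexp : Complex.exp (L w) ≠ 0 := Complex.exp_ne_zero _
  field_simp at hkey
  exact hkey.symm

lemma meanvalue_re {L : ℂ → ℂ} (hL : DifferentiableOn ℂ L (ball 0 1)) {r : ℝ}
    (h0 : 0 < r) (h1 : r < 1) :
    (∫ θ in (0:ℝ)..2*Real.pi, (L (circleMap 0 r θ)).re) = 2*Real.pi*(L 0).re := by
  have hsub : closedBall (0:ℂ) r ⊆ ball 0 1 := closedBall_subset_ball h1
  have hdc : DiffContOnCl ℂ L (ball 0 r) := by
    constructor
    · exact hL.mono (ball_subset_ball h1.le)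
    · rw [closure_ball (0:ℂ) (ne_of_gt h0)]
      exact (hL.continuousOn).mono hsub
  have hI := hdc.circleIntegral_sub_inv_smul (mem_ball_self h0)
  have hne : ∀ θ : ℝ, circleMap 0 r θ ≠ 0 := by
    intro θ
    simp [circleMap, Complex.exp_ne_zero, ne_of_gt h0]
  have hcont : Continuous fun θ : ℝ => L (circleMap 0 r θ) := by
    rw [continuous_iff_continuousAt]
    intro θ
    have hmem : circleMap 0 r θ ∈ ball (0:ℂ) 1 := by
      simp [norm_circleMap_zero, abs_of_pos h0, h1]
    exact ((hL.continuousOn.continuousAt (isOpen_ball.mem_nhds hmem)).comp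
      (continuous_circleMap 0 r).continuousAt)
  have heq : (∮ w in C(0, r), (w - 0)⁻¹ • L w) = I * ∫ θ in (0:ℝ)..2*Real.pi,
      L (circleMap 0 r θ) := by
    rw [circleIntegral]
    rw [← intervalIntegral.integral_const_mul]
    apply intervalIntegral.integral_congr
    intro θ _
    simp only [deriv_circleMap, smul_eq_mul, sub_zero]
    field_simp [hne θ]
  rw [heq] at hI
  have h2 : (∫ θ in (0:ℝ)..2*Real.pi, L (circleMap 0 r θ)) = (2*Real.pi) * L 0 := by
    have := hI
    rw [smul_eq_mul] at this
    have hIne : (I:ℂ) ≠ 0 := I_ne_zero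
    apply mul_left_cancel₀ hIne
    rw [this]
    push_cast
    ring
  have hint : IntervalIntegrable (fun θ : ℝ => L (circleMap 0 r θ)) volume 0 (2*Real.pi) :=
    hcont.intervalIntegrable _ _
  have := Complex.reCLM.intervalIntegral_comp_comm hint
  simp only [Complex.reCLM_apply] at this
  rw [this, h2]
  simp

lemma measE {f : ℂ → ℂ} (hc : ∀ w ∈ ball (0:ℂ) 1, ContinuousAt f w) (z : ℂ) :
    MeasurableSet {θ : ℝ |
      Tendsto (fun r : ℝ => f (r * Complex.exp (θ * Complex.I)))
        (𝓝[<] (1 : ℝ)) (𝓝 z)} := by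
  set A : ℕ → ℕ → Set ℝ := fun k m => ⋂ (q : ℚ) (_ : (q:ℝ) ∈ Ioo (1 - 1/(m+1 : ℝ)) 1),
    {θ : ℝ | dist (f ((q:ℝ) * Complex.exp (θ * Complex.I))) z ≤ 1/(k+1 : ℝ)} with hA_def
  have hmemball : ∀ (r : ℝ), |r| < 1 → ∀ θ : ℝ, ((r:ℂ) * Complex.exp (θ * Complex.I)) ∈
      ball (0:ℂ) 1 := by
    intro r hr θ
    simp only [mem_ball, dist_zero_right, norm_mul, Complex.norm_real, Real.norm_eq_abs]
    rw [Complex.norm_exp]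
    simp only [Complex.mul_re, Complex.ofReal_re, Complex.I_re, Complex.ofReal_im, Complex.I_im]
    simpa using hr
  have hEeq : {θ : ℝ | Tendsto (fun r : ℝ => f (r * Complex.exp (θ * Complex.I)))
      (𝓝[<] (1 : ℝ)) (𝓝 z)} = ⋂ k, ⋃ m, A k m := by
    ext θ
    simp only [mem_setOf_eq, mem_iInter, mem_iUnion]
    constructor
    · intro ht k
      have hball : closedBall z (1/(k+1 : ℝ)) ∈ 𝓝 z :=
        closedBall_mem_nhds z (by positivity)
      have hpre : (fun r : ℝ => f (r * Complex.exp (θ * Complex.I))) ⁻¹'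
          closedBall z (1/(k+1 : ℝ)) ∈ 𝓝[<] (1:ℝ) := ht hball
      rw [mem_nhdsLT_iff_exists_Ioo_subset] at hpre
      obtain ⟨l, hl, hsub⟩ := hpre
      have hl1 : l < 1 := hl
      obtain ⟨m, hm⟩ := exists_nat_one_div_lt (show (0:ℝ) < 1 - l by linarith)
      refine ⟨m, ?_⟩
      simp only [hA_def, mem_iInter, mem_setOf_eq]
      intro q hq
      have : (q:ℝ) ∈ Ioo l 1 := by
        rcases hq with ⟨hq1, hq2⟩
        constructor
        · have : 1 - 1/(m+1:ℝ) > l := by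
            have := hm
            linarith
          linarith
        · exact hq2
      have := hsub this
      simpa [dist_comm] using this
    · intro ht
      rw [Metric.tendsto_nhds]
      intro ε hε
      obtain ⟨k, hk⟩ := exists_nat_one_div_lt hε
      obtain ⟨m, hm⟩ := ht k
      simp only [hA_def, mem_iInter, mem_setOf_eq] at hm
      have hm1 : (0:ℝ) < 1/(m+1:ℝ) := by positivity
      have hm2 : 1 - 1/(m+1:ℝ) < 1 := by linarith
      have hm0 : (0:ℝ) ≤ 1 - 1/(m+1:ℝ) := by
        have : 1/(m+1:ℝ) ≤ 1 := by
          rw [div_le_one (by positivity)]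
          simp
        linarith
      have hkey : ∀ r ∈ Ioo (1 - 1/(m+1:ℝ)) 1,
          dist (f ((r:ℝ) * Complex.exp (θ * Complex.I))) z ≤ 1/(k+1:ℝ) := by
        intro r hr
        -- choose rationals approaching r from below
        have hq : ∀ j : ℕ, ∃ q : ℚ, (q:ℝ) ∈ Ioo (max (1 - 1/(m+1:ℝ)) (r - 1/(j+1))) r := by
          intro j
          have h1 : max (1 - 1/(m+1:ℝ)) (r - 1/(j+1)) < r := by
            apply max_lt hr.1
            have : (0:ℝ) < 1/(j+1) := by positivity
            linarith
          obtain ⟨q, hq1, hq2⟩ := exists_rat_btwn h1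
          exact ⟨q, hq1, hq2⟩
        choose Q hQ using hq
        have hQmem : ∀ j, (Q j : ℝ) ∈ Ioo (1 - 1/(m+1:ℝ)) 1 := by
          intro j
          exact ⟨lt_of_le_of_lt (le_max_left _ _) (hQ j).1, lt_trans (hQ j).2 hr.2⟩
        have hQd : ∀ j, dist (f ((Q j : ℝ) * Complex.exp (θ * Complex.I))) z ≤ 1/(k+1:ℝ) :=
          fun j => hm (Q j) (hQmem j)
        have hQt : Tendsto (fun j => (Q j : ℝ)) atTop (𝓝 r) := by
          apply tendsto_of_tendsto_of_tendsto_of_le_of_le (g := fun j : ℕ => r - 1/(j+1:ℝ))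
            (h := fun _ : ℕ => r)
          · have : Tendsto (fun j : ℕ => 1/(j+1:ℝ)) atTop (𝓝 0) :=
              tendsto_one_div_add_atTop_nhds_zero_nat
            have h2 := Tendsto.sub (tendsto_const_nhds : Tendsto (fun _ : ℕ => r) atTop (𝓝 r)) this
            simpa using h2
          · exact tendsto_const_nhds
          · intro j
            exact le_trans (le_max_right _ _) (hQ j).1.le
          · exact fun j => (hQ j).2.le
        have hrball : ((r:ℂ) * Complex.exp (θ * Complex.I)) ∈ ball (0:ℂ) 1 :=
          hmemball r (by rw [abs_of_pos (by linarith [hr.1] : (0:ℝ) < r)]; exact hr.2) θ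
        have hfc : ContinuousAt f ((r:ℂ) * Complex.exp (θ * Complex.I)) := hc _ hrball
        have hcomp : Tendsto (fun j => f ((Q j : ℝ) * Complex.exp (θ * Complex.I))) atTop
            (𝓝 (f ((r:ℝ) * Complex.exp (θ * Complex.I)))) := by
          apply hfc.tendsto.comp
          have : Continuous (fun s : ℝ => (s:ℂ) * Complex.exp (θ * Complex.I)) := by fun_prop
          exact (this.tendsto r).comp hQt
        have := (tendsto_const_nhds.dist hcomp : Tendsto
          (fun j => dist z (f ((Q j : ℝ) * Complex.exp (θ * Complex.I)))) atTop _)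
        have hle := le_of_tendsto this (Filter.Eventually.of_forall
          (fun j => by rw [dist_comm]; exact hQd j))
        rwa [dist_comm] at hle
      filter_upwards [Ioo_mem_nhdsLT_of_mem (⟨hm2, le_refl 1⟩ :
        (1:ℝ) ∈ Ioc (1 - 1/(m+1:ℝ)) 1)] with r hr
      exact lt_of_le_of_lt (hkey r hr) hk
  rw [hEeq]
  apply MeasurableSet.iInter
  intro k
  apply MeasurableSet.iUnion
  intro m
  apply MeasurableSet.iInter
  intro q
  apply MeasurableSet.iInter
  intro hq
  have hcont : Continuous (fun θ : ℝ => dist (f ((q:ℝ) * Complex.exp (θ * Complex.I))) z) := by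
    apply Continuous.dist _ continuous_const
    rw [continuous_iff_continuousAt]
    intro θ
    have hqb : ((q:ℝ) : ℂ) * Complex.exp (θ * Complex.I) ∈ ball (0:ℂ) 1 := by
      apply hmemball
      rcases hq with ⟨h1, h2⟩
      have hm0 : (0:ℝ) ≤ 1 - 1/(m+1:ℝ) := by
        have : 1/(m+1:ℝ) ≤ 1 := by
          rw [div_le_one (by positivity)]
          simp
        linarith
      rw [abs_of_pos (by linarith : (0:ℝ) < (q:ℝ))]
      exact h2
    exact ContinuousAt.comp (hc _ hqb) (by fun_prop)
  exact (isClosed_le hcont continuous_const).measurableSet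

/-- If `f` is a conformal map of the unit disc onto a domain `H` and `z ∈ ∂H`,
then the set of boundary points (angles) at which `f` has radial limit `z`
has one-dimensional Lebesgue (arc-length) measure zero. -/
theorem stmt_0 (f : ℂ → ℂ) (H : Set ℂ)
    (hf : DifferentiableOn ℂ f (Metric.ball 0 1))
    (hinj : Set.InjOn f (Metric.ball 0 1))
    (hH : H = f '' Metric.ball 0 1)
    (z : ℂ) (hz : z ∈ frontier H) :
    MeasureTheory.volume {θ : ℝ |
      Tendsto (fun r : ℝ => f (r * Complex.exp (θ * Complex.I)))
        (𝓝[<] (1 : ℝ)) (𝓝 z)} = 0 := by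
  have hball : IsOpen (ball (0:ℂ) 1) := isOpen_ball
  have h0B : (0:ℂ) ∈ ball (0:ℂ) 1 := mem_ball_self one_pos
  have hhalfB : (((1:ℝ)/2 : ℝ) : ℂ) ∈ ball (0:ℂ) 1 := by
    simp only [mem_ball, dist_zero_right, Complex.norm_real, Real.norm_eq_abs]
    rw [abs_of_pos] <;> norm_num
  have hhalfne : (((1:ℝ)/2 : ℝ) : ℂ) ≠ 0 := by
    simp only [ne_eq, Complex.ofReal_eq_zero]; norm_num
  have hfa : AnalyticOnNhd ℂ f (ball 0 1) := hf.analyticOnNhd hball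
  -- H is open, so z ∉ H
  have hHopen : IsOpen H := by
    rcases hfa.is_constant_or_isOpen (convex_ball (0:ℂ) 1).isPreconnected with ⟨w, hw⟩ | hopen
    · exfalso
      have := hinj h0B hhalfB (by rw [hw 0 h0B, hw _ hhalfB])
      exact hhalfne this.symm
    · rw [hH]; exact hopen _ subset_rfl hball
  have hzH : z ∉ H := by
    intro hmem
    have := hz.2
    rw [hHopen.interior_eq] at this
    exact this hmem
  have hfz : ∀ w ∈ ball (0:ℂ) 1, f w - z ≠ 0 := by
    intro w hw
    rw [sub_ne_zero]
    intro heq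
    exact hzH (hH ▸ ⟨w, hw, heq⟩)
  -- the square root h of f - z
  obtain ⟨L₁, hL₁d, hL₁⟩ := exists_log_ball (hf.sub (differentiableOn_const z)) hfz
  have hL₁diff : DifferentiableOn ℂ L₁ (ball 0 1) := fun w hw =>
    ((hL₁d w hw).differentiableAt).differentiableWithinAt
  set h : ℂ → ℂ := fun w => Complex.exp (L₁ w / 2) with hh_def
  have hh2 : ∀ w ∈ ball (0:ℂ) 1, h w ^ 2 = f w - z := by
    intro w hw
    rw [hh_def]
    rw [← Complex.exp_nat_mul]
    rw [show (2:ℕ) * (L₁ w / 2) = L₁ w by push_cast; ring]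
    exact hL₁ w hw
  have hhd : DifferentiableOn ℂ h (ball 0 1) := (hL₁diff.div_const 2).cexp
  have hh0 : ∀ w ∈ ball (0:ℂ) 1, h w ≠ 0 := fun w _ => Complex.exp_ne_zero _
  -- h '' ball is open
  have hha : AnalyticOnNhd ℂ h (ball 0 1) := hhd.analyticOnNhd hball
  have hhopen : IsOpen (h '' ball 0 1) := by
    rcases hha.is_constant_or_isOpen (convex_ball (0:ℂ) 1).isPreconnected with ⟨w, hw⟩ | hopen
    · exfalso
      have hfeq : f 0 = f (((1:ℝ)/2 : ℝ) : ℂ) := by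
        have h1 := hh2 0 h0B
        have h2 := hh2 _ hhalfB
        rw [hw 0 h0B] at h1
        rw [hw _ hhalfB] at h2
        have : f 0 - z = f (((1:ℝ)/2 : ℝ) : ℂ) - z := by rw [← h1, ← h2]
        linear_combination this
      exact hhalfne (hinj h0B hhalfB hfeq).symm
    · exact hopen _ subset_rfl hball
  set c : ℂ := h 0 with hc_def
  have hc0 : c ≠ 0 := hh0 0 h0B
  obtain ⟨δ, hδ0, hδsub⟩ := Metric.isOpen_iff.1 hhopen c (mem_image_of_mem h h0B)
  have hkey : ∀ w ∈ ball (0:ℂ) 1, δ ≤ ‖h w + c‖ := by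
    intro w hw
    by_contra hlt
    push_neg at hlt
    have hmem : -(h w) ∈ ball c δ := by
      rw [mem_ball]
      rw [dist_eq_norm]
      rw [show -(h w) - c = -(h w + c) by ring, norm_neg]
      exact hlt
    obtain ⟨b, hbB, hb⟩ := hδsub hmem
    have : f b - z = f w - z := by
      rw [← hh2 b hbB, ← hh2 w hw, hb]
      ring_nf
    have hbw : b = w := hinj hbB hw (by linear_combination this)
    rw [hbw] at hb
    have : h w = 0 := by
      have h2 : (2:ℂ) * h w = 0 := by linear_combination hb
      rcases mul_eq_zero.1 h2 with h3 | h3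
      · norm_num at h3
      · exact h3
    exact hh0 w hw this
  have hdenom : ∀ w ∈ ball (0:ℂ) 1, h w + c ≠ 0 := by
    intro w hw
    intro heq
    have := hkey w hw
    rw [heq] at this
    simp at this
    linarith
  set G : ℂ → ℂ := fun w => h w / (h w + c) with hG_def
  have hGd : DifferentiableOn ℂ G (ball 0 1) :=
    hhd.div (hhd.add (differentiableOn_const c)) hdenom
  have hG0 : ∀ w ∈ ball (0:ℂ) 1, G w ≠ 0 := fun w hw =>
    div_ne_zero (hh0 w hw) (hdenom w hw)
  set Mb : ℝ := 1 + ‖c‖ / δ with hMb_def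
  have hMb1 : 1 ≤ Mb := by
    rw [hMb_def]
    have : 0 ≤ ‖c‖ / δ := by positivity
    linarith
  have hGb : ∀ w ∈ ball (0:ℂ) 1, ‖G w‖ ≤ Mb := by
    intro w hw
    rw [hG_def]
    simp only [norm_div]
    rw [div_le_iff₀ (lt_of_lt_of_le hδ0 (hkey w hw))]
    have h1 : ‖h w‖ ≤ ‖h w + c‖ + ‖c‖ := by
      calc ‖h w‖ = ‖(h w + c) - c‖ := by ring_nf
        _ ≤ ‖h w + c‖ + ‖c‖ := by
            rw [sub_eq_add_neg]
            refine (norm_add_le _ _).trans ?_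
            simp
    have h2 : ‖c‖ ≤ (‖c‖ / δ) * ‖h w + c‖ := by
      rw [div_mul_eq_mul_div, le_div_iff₀ hδ0]
      apply mul_le_mul_of_nonneg_left (hkey w hw) (norm_nonneg _)
    rw [hMb_def]
    nlinarith [hkey w hw, hδ0]
  have hG0v : G 0 = 1/2 := by
    have h1 : G 0 = c / (c + c) := by rw [hG_def]
    rw [h1, show c + c = 2*c by ring, div_mul_eq_div_div_swap, div_self hc0]
  -- logarithm of G and mean value property
  obtain ⟨L, hLd, hL⟩ := exists_log_ball hGd hG0
  have hLdiff : DifferentiableOn ℂ L (ball 0 1) := fun w hw =>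
    ((hLd w hw).differentiableAt).differentiableWithinAt
  have hre : ∀ w ∈ ball (0:ℂ) 1, (L w).re = Real.log (‖G w‖) := by
    intro w hw
    have h1 := hL w hw
    have habs : Real.exp ((L w).re) = ‖G w‖ := by rw [← Complex.norm_exp, h1]
    rw [← habs, Real.log_exp]
  set a : ℝ := Real.log (‖G 0‖) with ha_def
  have hmean : ∀ r : ℝ, 0 < r → r < 1 →
      (∫ θ in (0:ℝ)..2*Real.pi, Real.log (‖G (circleMap 0 r θ)‖))
        = 2*Real.pi*a := by
    intro r hr0 hr1
    rw [ha_def, ← hre 0 h0B, ← meanvalue_re hLdiff hr0 hr1]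
    apply intervalIntegral.integral_congr
    intro θ _
    have hmem : circleMap 0 r θ ∈ ball (0:ℂ) 1 := by
      simp [norm_circleMap_zero, abs_of_pos hr0, hr1]
    exact (hre _ hmem).symm
  -- the exceptional sets
  have hcf : ∀ w ∈ ball (0:ℂ) 1, ContinuousAt f w := fun w hw =>
    hf.continuousOn.continuousAt (hball.mem_nhds hw)
  set E : Set ℝ := {θ : ℝ | Tendsto (fun r : ℝ => f (r * Complex.exp (θ * Complex.I)))
      (𝓝[<] (1 : ℝ)) (𝓝 z)} with hE_def
  have hEm : MeasurableSet E := measE hcf z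
  set S : Set ℝ := E ∩ Ico 0 (2*Real.pi) with hS_def
  have hSm : MeasurableSet S := hEm.inter measurableSet_Ico
  set T : Set ℝ := Ico (0:ℝ) (2*Real.pi) \ E with hT_def
  have hTm : MeasurableSet T := measurableSet_Ico.diff hEm
  have h2π : (0:ℝ) < 2*Real.pi := by positivity
  have hSfin : volume S < ⊤ := by
    apply lt_of_le_of_lt (measure_mono (inter_subset_right))
    rw [Real.volume_Ico]
    exact ENNReal.ofReal_lt_top
  have hTfin : volume T < ⊤ := by
    apply lt_of_le_of_lt (measure_mono (diff_subset))
    rw [Real.volume_Ico]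
    exact ENNReal.ofReal_lt_top
  -- the radii
  set rr : ℕ → ℝ := fun n => 1 - 1/(n+2 : ℝ) with hrr_def
  have hrr0 : ∀ n, 0 < rr n := by
    intro n
    have h1 : (2:ℝ) ≤ (n:ℝ)+2 := by linarith [Nat.cast_nonneg (α := ℝ) n]
    have h2 : 1/((n:ℝ)+2) ≤ 1/2 := by
      apply one_div_le_one_div_of_le (by norm_num) h1
    simp only [hrr_def]
    linarith
  have hrr1 : ∀ n, rr n < 1 := by
    intro n
    have : (0:ℝ) < 1/((n:ℝ)+2) := by positivity
    simp only [hrr_def]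
    linarith
  have hrrt : Tendsto rr atTop (𝓝[<] (1:ℝ)) := by
    apply tendsto_nhdsWithin_of_tendsto_nhds_of_eventually_within
    · have h1 : Tendsto (fun n : ℕ => ((n:ℝ)+2)) atTop atTop :=
        tendsto_atTop_add_const_right atTop 2 tendsto_natCast_atTop_atTop
      have h2 : Tendsto (fun n : ℕ => 1/((n:ℝ)+2)) atTop (𝓝 0) := by
        simpa [one_div, Pi.inv_def] using h1.inv_tendsto_atTop
      have h3 := (tendsto_const_nhds : Tendsto (fun _ : ℕ => (1:ℝ)) atTop (𝓝 1)).sub h2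
      simpa [hrr_def] using h3
    · exact Eventually.of_forall (fun n => hrr1 n)
  -- the functions on the circle
  have hcirc : ∀ (n : ℕ) (θ : ℝ), circleMap 0 (rr n) θ ∈ ball (0:ℂ) 1 := by
    intro n θ
    simp [norm_circleMap_zero, abs_of_pos (hrr0 n), hrr1 n]
  have hGcont : ∀ n, Continuous (fun θ : ℝ => G (circleMap 0 (rr n) θ)) := by
    intro n
    rw [continuous_iff_continuousAt]
    intro θ
    exact ((hGd.continuousOn.continuousAt (hball.mem_nhds (hcirc n θ))).comp
      (continuous_circleMap 0 (rr n)).continuousAt)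
  set u : ℕ → ℝ → ℝ := fun n θ => Real.log (‖G (circleMap 0 (rr n) θ)‖) with hu_def
  have hucont : ∀ n, Continuous (u n) := by
    intro n
    rw [continuous_iff_continuousAt]
    intro θ
    have hcontabs : Continuous (fun θ : ℝ => ‖G (circleMap 0 (rr n) θ)‖) :=
      continuous_norm.comp (hGcont n)
    exact ContinuousAt.comp (g := Real.log)
      (f := fun θ : ℝ => ‖G (circleMap 0 (rr n) θ)‖) (x := θ)
      (Real.continuousAt_log (norm_ne_zero_iff.mpr (hG0 _ (hcirc n θ))))
      hcontabs.continuousAt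
  have hMeq : ∀ n, (∫ θ in (0:ℝ)..2*Real.pi, u n θ) = 2*Real.pi*a :=
    fun n => hmean (rr n) (hrr0 n) (hrr1 n)
  set M : ℝ := Real.log Mb with hM_def
  have hM0 : 0 ≤ M := Real.log_nonneg hMb1
  have hub : ∀ n θ, u n θ ≤ M :=
    fun n θ => Real.log_le_log (norm_pos_iff.mpr (hG0 _ (hcirc n θ))) (hGb _ (hcirc n θ))
  -- pointwise blow-up on E
  have htendE : ∀ θ ∈ E, Tendsto (fun n => u n θ) atTop atBot := by
    intro θ hθ
    have h1 : Tendsto (fun ρ : ℝ => f (ρ * Complex.exp (θ * Complex.I))) (𝓝[<] (1:ℝ)) (𝓝 z) := hθ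
    have h2 : Tendsto (fun n => f (circleMap 0 (rr n) θ)) atTop (𝓝 z) := by
      have := h1.comp hrrt
      simpa [Function.comp_def, circleMap] using this
    have h3 : Tendsto (fun n => ‖h (circleMap 0 (rr n) θ)‖) atTop (𝓝 0) := by
      have hsq : Tendsto (fun n => ‖h (circleMap 0 (rr n) θ)‖ ^ 2) atTop (𝓝 0) := by
        have hz0 : Tendsto (fun n => f (circleMap 0 (rr n) θ) - z) atTop (𝓝 0) := by
          simpa using h2.sub (tendsto_const_nhds : Tendsto (fun _ : ℕ => z) atTop (𝓝 z))
        have habs := (continuous_norm.tendsto 0).comp hz0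
        simp only [Function.comp_def, norm_zero] at habs
        exact habs.congr (fun n => by rw [← hh2 _ (hcirc n θ), norm_pow])
      have hsqrt := (Real.continuous_sqrt.tendsto 0).comp hsq
      simp only [Function.comp_def, Real.sqrt_zero] at hsqrt
      exact hsqrt.congr (fun n => Real.sqrt_sq (norm_nonneg _))
    have h4 : Tendsto (fun n => ‖G (circleMap 0 (rr n) θ)‖) atTop (𝓝 0) := by
      apply squeeze_zero (fun n => norm_nonneg _) (g := fun n =>
        ‖h (circleMap 0 (rr n) θ)‖ / δ)
      · intro n
        rw [hG_def]
        simp only [norm_div]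
        apply div_le_div_of_nonneg_left (norm_nonneg _) hδ0 (hkey _ (hcirc n θ))
      · simpa using h3.div_const δ
    have h5 : Tendsto (fun n => ‖G (circleMap 0 (rr n) θ)‖) atTop (𝓝[>] 0) := by
      apply tendsto_nhdsWithin_of_tendsto_nhds_of_eventually_within _ h4
      exact Eventually.of_forall (fun n => norm_pos_iff.mpr (hG0 _ (hcirc n θ)))
    exact Real.tendsto_log_nhdsGT_zero.comp h5
  -- integrability
  have hIntIcc : ∀ n, IntegrableOn (u n) (Icc (0:ℝ) (2*Real.pi)) volume := fun n =>
    (hucont n).continuousOn.integrableOn_compact isCompact_Icc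
  have hIntIco : ∀ n, IntegrableOn (u n) (Ico (0:ℝ) (2*Real.pi)) volume := fun n =>
    (hIntIcc n).mono_set Ico_subset_Icc_self
  have hS_sub : S ⊆ Icc (0:ℝ) (2*Real.pi) := inter_subset_right.trans Ico_subset_Icc_self
  have hsplit : ∀ n, (∫ θ in Ico (0:ℝ) (2*Real.pi), u n θ)
      = (∫ θ in S, u n θ) + ∫ θ in T, u n θ := by
    intro n
    have h1 := MeasureTheory.integral_inter_add_diff (s := Ico (0:ℝ) (2*Real.pi)) (t := E)
      (f := u n) (μ := volume) hEm (hIntIco n)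
    rw [← h1, hS_def, hT_def, inter_comm]
  have hIcoeq : ∀ n, (∫ θ in Ico (0:ℝ) (2*Real.pi), u n θ) = 2*Real.pi*a := by
    intro n
    rw [MeasureTheory.integral_Ico_eq_integral_Ioo, ← MeasureTheory.integral_Ioc_eq_integral_Ioo,
      ← intervalIntegral.integral_of_le h2π.le]
    exact hMeq n
  have hTbound : ∀ n, (∫ θ in T, u n θ) ≤ M * (volume T).toReal := by
    intro n
    have h1 : (∫ θ in T, u n θ) ≤ ∫ _ in T, M := by
      apply setIntegral_mono_on ((hIntIco n).mono_set diff_subset)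
        (integrableOn_const (C := M) hTfin.ne) hTm (fun θ _ => hub n θ)
    rw [setIntegral_const, smul_eq_mul, mul_comm] at h1
    exact h1
  -- the key estimate for every K
  have hKbound : ∀ K : ℝ, 2*Real.pi*a ≤ (volume S).toReal * (-K) + M * (volume T).toReal := by
    intro K
    set v : ℕ → ℝ → ℝ := fun n θ => max (u n θ) (-K) with hv_def
    have hvcont : ∀ n, Continuous (v n) := fun n => (hucont n).max continuous_const
    have hvInt : ∀ n, IntegrableOn (v n) S volume := fun n =>
      ((hvcont n).continuousOn.integrableOn_compact isCompact_Icc).mono_set hS_sub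
    have hSbound : ∀ n, (∫ θ in S, u n θ) ≤ ∫ θ in S, v n θ := by
      intro n
      apply setIntegral_mono_on ((hIntIco n).mono_set inter_subset_right) (hvInt n) hSm
        (fun θ _ => le_max_left _ _)
    have hdct : Tendsto (fun n => ∫ θ in S, v n θ) atTop (𝓝 (∫ _ in S, (-K))) := by
      apply MeasureTheory.tendsto_integral_of_dominated_convergence
        (bound := fun _ => M + |K|)
      · exact fun n => ((hvcont n).aestronglyMeasurable).restrict
      · exact integrableOn_const (C := M + |K|) hSfin.ne
      · intro n
        apply ae_of_all
        intro θ
        rw [Real.norm_eq_abs, abs_le]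
        constructor
        · show -(M + |K|) ≤ max (u n θ) (-K)
          have h1 := le_max_right (u n θ) (-K)
          have h2 := le_abs_self K
          linarith [hM0]
        · show max (u n θ) (-K) ≤ M + |K|
          apply max_le
          · linarith [hub n θ, abs_nonneg K]
          · linarith [neg_abs_le K, hM0]
      · apply (ae_restrict_iff' hSm).2
        apply ae_of_all
        intro θ hθ
        have h1 := htendE θ hθ.1
        have h2 : ∀ᶠ n in atTop, u n θ ≤ -K := h1.eventually (eventually_le_atBot (-K))
        apply Tendsto.congr' _ (tendsto_const_nhds : Tendsto (fun _ : ℕ => -K) atTop (𝓝 (-K)))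
        filter_upwards [h2] with n hn
        show -K = max (u n θ) (-K)
        exact (max_eq_right hn).symm
    rw [setIntegral_const, smul_eq_mul] at hdct
    have hchain : ∀ n, 2*Real.pi*a ≤ (∫ θ in S, v n θ) + M * (volume T).toReal := by
      intro n
      calc 2*Real.pi*a = (∫ θ in S, u n θ) + ∫ θ in T, u n θ := by
            rw [← hsplit n, hIcoeq n]
        _ ≤ (∫ θ in S, v n θ) + M * (volume T).toReal :=
            add_le_add (hSbound n) (hTbound n)
    have hlim : Tendsto (fun n => (∫ θ in S, v n θ) + M * (volume T).toReal) atTop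
        (𝓝 ((volume S).toReal * (-K) + M * (volume T).toReal)) :=
      hdct.add_const _
    exact ge_of_tendsto hlim (Eventually.of_forall hchain)
  -- conclude volume S = 0
  have hs0 : (volume S).toReal = 0 := by
    by_contra hs
    have hspos : 0 < (volume S).toReal :=
      lt_of_le_of_ne ENNReal.toReal_nonneg (Ne.symm hs)
    have hk := hKbound ((M * (volume T).toReal - 2*Real.pi*a + 1) / (volume S).toReal)
    rw [mul_comm ((volume S).toReal)] at hk
    rw [neg_mul] at hk
    rw [div_mul_cancel₀ _ (ne_of_gt hspos)] at hk
    linarith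
  have hS0 : volume S = 0 := by
    rcases (ENNReal.toReal_eq_zero_iff _).1 hs0 with hh | hh
    · exact hh
    · exact absurd hh (ne_of_lt hSfin)
  -- periodicity and conclusion
  have hper : ∀ (θ : ℝ) (n : ℤ), θ ∈ E → θ - 2*Real.pi*n ∈ E := by
    intro θ n hθ
    have hexp : ∀ ρ : ℝ, ((ρ:ℂ) * Complex.exp (((θ - 2*Real.pi*n : ℝ) : ℂ) * Complex.I))
        = (ρ:ℂ) * Complex.exp ((θ:ℂ) * Complex.I) := by
      intro ρ
      congr 1
      rw [show (((θ - 2*Real.pi*n : ℝ) : ℂ) * Complex.I)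
        = (θ:ℂ)*Complex.I - (n:ℂ)*(2*(Real.pi:ℂ)*Complex.I) by push_cast; ring]
      rw [Complex.exp_sub, Complex.exp_int_mul_two_pi_mul_I]
      simp
    simp only [hE_def, mem_setOf_eq, hexp]
    exact hθ
  have hcover : E ⊆ ⋃ n : ℤ, (fun θ : ℝ => θ + 2*Real.pi*n) '' S := by
    intro θ hθ
    set n : ℤ := ⌊θ / (2*Real.pi)⌋ with hn_def
    have hmem : θ - 2*Real.pi*n ∈ Ico (0:ℝ) (2*Real.pi) := by
      constructor
      · rw [le_sub_iff_add_le, zero_add]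
        have h1 := Int.floor_le (θ / (2*Real.pi))
        rw [← hn_def] at h1
        calc 2*Real.pi*(n:ℝ) ≤ 2*Real.pi*(θ / (2*Real.pi)) :=
              mul_le_mul_of_nonneg_left h1 h2π.le
          _ = θ := by field_simp
      · have h1 := Int.lt_floor_add_one (θ / (2*Real.pi))
        rw [← hn_def] at h1
        have h2 : θ < 2*Real.pi*((n:ℝ)+1) := by
          calc θ = 2*Real.pi*(θ / (2*Real.pi)) := by field_simp
            _ < 2*Real.pi*((n:ℝ)+1) := by
                exact mul_lt_mul_of_pos_left h1 h2π
        linarith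
    exact mem_iUnion.2 ⟨n, ⟨θ - 2*Real.pi*n, ⟨hper θ n hθ, hmem⟩, by ring⟩⟩
  apply measure_mono_null hcover
  apply measure_iUnion_null
  intro n
  have himg : (fun θ : ℝ => θ + 2*Real.pi*n) '' S
      = (fun θ : ℝ => θ + -(2*Real.pi*n)) ⁻¹' S := by
    ext x
    simp only [mem_image, mem_preimage]
    constructor
    · rintro ⟨y, hy, rfl⟩
      simpa using hy
    · intro hx
      exact ⟨x + -(2*Real.pi*n), hx, by ring⟩
  rw [himg, measure_preimage_add_right, hS0]
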